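/- Let 𝒳 be a nonempty finite set, p a probability distribution on 𝒳 with p(x) > 0 for all x, K a Markov kernel on 𝒳 with K(x,y) > 0 for all x, y that is reversible with respect to p, α > 0, and r : 𝒳 → ℝ. Let p*(x) = p(x)·exp(r(x)/α)/Z with Z = Σ_{x'} p(x')·exp(r(x')/α), let λ(x,y) = 1/(p(x)·K(x,y)·exp((r(x)+r(y))/α)), and define the Multiple-Try Metropolis weight w(x,y) = p*(y)·K(y,x)·λ(y,x). Then w(x,y) = exp(−r(x)/α)/Z for all y; in particular w(x,·) does not depend on y, and for any N ≥ 1 and any candidates y_1, …, y_N ∈ 𝒳, the normalized selection weight satisfies w(x, y_n) / Σ_{j=1}^{N} w(x, y_j) = 1/N for every n. -/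

import Mathlib

/-- With target `p*(x) = p x · exp(r x / α) / Z`,
`Z = Σ_{x'} p x' · exp(r x' / α)`, balancing function
`λ(x,y) = 1/(p x · K x y · exp((r x + r y)/α))`, and Multiple-Try Metropolis weight
`w(x,y) = p*(y) · K(y,x) · λ(y,x)`, one has `w(x,y) = exp(−r x / α)/Z` for every `y`;
in particular `w(x,·)` does not depend on `y`, and for any `N ≥ 1` candidates
`y₁,…,y_N` the normalized selection weight is uniform: `w(x,yₙ)/Σⱼ w(x,yⱼ) = 1/N`. -/
theorem mtm_weight_uniform
    {X : Type*} [Fintype X] [Nonempty X]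
    (p : X → ℝ) (hp_pos : ∀ x, 0 < p x) (hp_sum : ∑ x, p x = 1)
    (K : X → X → ℝ) (hK_pos : ∀ x y, 0 < K x y) (hK_sum : ∀ x, ∑ y, K x y = 1)
    (hrev : ∀ x y, p x * K x y = p y * K y x)
    (α : ℝ) (hα : 0 < α) (r : X → ℝ)
    (pstar : X → ℝ)
    (hpstar : ∀ x, pstar x =
      p x * Real.exp (r x / α) / ∑ x', p x' * Real.exp (r x' / α))
    (lam : X → X → ℝ)
    (hlam : ∀ x y, lam x y = 1 / (p x * K x y * Real.exp ((r x + r y) / α)))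
    (w : X → X → ℝ) (hw : ∀ x y, w x y = pstar y * K y x * lam y x) :
    (∀ x y, w x y =
      Real.exp (-(r x) / α) / ∑ x', p x' * Real.exp (r x' / α))
    ∧ ∀ N : ℕ, 1 ≤ N → ∀ x : X, ∀ ys : Fin N → X, ∀ n : Fin N,
        w x (ys n) / (∑ j, w x (ys j)) = 1 / (N : ℝ) := by
  have hZ : 0 < ∑ x', p x' * Real.exp (r x' / α) :=
    Finset.sum_pos (fun x _ => mul_pos (hp_pos x) (Real.exp_pos _)) Finset.univ_nonempty
  have key : ∀ x y, w x y =
      Real.exp (-(r x) / α) / ∑ x', p x' * Real.exp (r x' / α) := by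
    intro x y
    rw [hw, hpstar, hlam]
    have h1 : Real.exp ((r y + r x) / α) = Real.exp (r y / α) * Real.exp (r x / α) := by
      rw [← Real.exp_add, ← add_div]
    have h2 : Real.exp (-(r x) / α) = (Real.exp (r x / α))⁻¹ := by
      rw [← Real.exp_neg, neg_div]
    rw [h1, h2]
    have hpy := (hp_pos y).ne'
    have hKy := (hK_pos y x).ne'
    field_simp
  refine ⟨key, fun N hN x ys n => ?_⟩
  have hsum : ∑ j : Fin N, w x (ys j) =
      N * (Real.exp (-(r x) / α) / ∑ x', p x' * Real.exp (r x' / α)) := by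
    simp [key, Finset.sum_const, Finset.card_univ]
  rw [key, hsum]
  have hNe : (N : ℝ) ≠ 0 := Nat.cast_ne_zero.mpr (by omega)
  have hwne : Real.exp (-(r x) / α) / ∑ x', p x' * Real.exp (r x' / α) ≠ 0 :=
    div_ne_zero (Real.exp_ne_zero _) hZ.ne'
  field_simp
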